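/- arXiv:1212.4178 — 2 statements merged into one kernel-verified Lean document; each statement's English description precedes it below -/
import Mathlib

section
/- Let m ≥ 1 be a natural number and let ϖ_m = 2∫_0^1 (1-t^m)^(-1/2) dt. Define the congruence Gamma function Γ_M(n,k) for a natural number M ≥ 1, n ≥ 0 and 0 ≤ k < M by Γ_M(0,k) = 1, Γ_M(1,0) = 1, and Γ_M(n+1,k) = (Mn+k)·Γ_M(n,k). Then ϖ_m = lim_{n→∞} (Γ_2(n,0)·Γ_{2m}(n,m+2))/(Γ_2(n,1)·Γ_{2m}(n,2)) · (4/m). -/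
open Filter Topology MeasureTheory

/-- The congruence Gamma function `Γ_M(n, k)`, defined recursively by
`Γ_M(0, k) = 1`, `Γ_M(1, 0) = 1`, and `Γ_M(n+1, k) = (M n + k) Γ_M(n, k)`. -/
noncomputable def congGamma (M : ℕ) : ℕ → ℕ → ℝ
  | 0, _ => 1
  | n + 1, k => if n = 0 ∧ k = 0 then 1 else ((M * n + k : ℕ) : ℝ) * congGamma M n k

lemma congGamma_pos_k (M : ℕ) (hM : M ≠ 0) (k : ℕ) (hk : k ≠ 0) (n : ℕ) :
    congGamma M n k = (M : ℝ) ^ n * ∏ j ∈ Finset.range n, ((k : ℝ) / M + j) := by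
  induction n with
  | zero => simp [congGamma]
  | succ n ih =>
    have hM' : (M : ℝ) ≠ 0 := Nat.cast_ne_zero.mpr hM
    rw [congGamma, if_neg (by tauto), ih, Finset.prod_range_succ]
    push_cast
    field_simp
    ring

lemma congGamma_zero (M : ℕ) (n : ℕ) :
    congGamma M (n + 1) 0 = (M : ℝ) ^ n * (Nat.factorial n : ℝ) := by
  induction n with
  | zero => simp [congGamma]
  | succ n ih =>
    rw [congGamma, if_neg (by simp), ih]
    push_cast [Nat.factorial_succ]
    ring

lemma aux_prod_pos {s : ℝ} (hs : 0 < s) (n : ℕ) : 0 < ∏ j ∈ Finset.range n, (s + j) :=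
  Finset.prod_pos fun j _ => by positivity

lemma seq_eq (m : ℕ) (hm : 1 ≤ m) (n : ℕ) :
    congGamma 2 (n + 1) 0 * congGamma (2 * m) (n + 1) (m + 2) /
        (congGamma 2 (n + 1) 1 * congGamma (2 * m) (n + 1) 2) * (4 / m)
      = (2 / m) * (Real.GammaSeq (1 / 2) (n + 1) * Real.GammaSeq (1 / m) (n + 1) /
          Real.GammaSeq (1 / 2 + 1 / m) (n + 1)) *
        ((1 / 2 + (n + 1 : ℝ)) * (1 / m + (n + 1 : ℝ)) /
          ((n + 1 : ℝ) * (1 / 2 + 1 / m + (n + 1 : ℝ)))) := by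
  have hm' : (m : ℝ) ≠ 0 := Nat.cast_ne_zero.mpr (by omega)
  have e1 : ((1 : ℕ) : ℝ) / ((2 : ℕ) : ℝ) = 1 / 2 := by norm_num
  have e2 : ((2 : ℕ) : ℝ) / ((2 * m : ℕ) : ℝ) = 1 / m := by
    push_cast; field_simp
  have e3 : ((m + 2 : ℕ) : ℝ) / ((2 * m : ℕ) : ℝ) = 1 / 2 + 1 / m := by
    push_cast; field_simp
  rw [congGamma_zero, congGamma_pos_k 2 (by norm_num) 1 (by norm_num),
    congGamma_pos_k (2 * m) (by omega) (m + 2) (by omega),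
    congGamma_pos_k (2 * m) (by omega) 2 (by norm_num), e1, e2, e3]
  unfold Real.GammaSeq
  rw [Finset.prod_range_succ (fun j => (1 / 2 + 1 / (m : ℝ) + j)) (n + 1),
    Finset.prod_range_succ (fun j => (1 / 2 + (j : ℝ))) (n + 1),
    Finset.prod_range_succ (fun j => (1 / (m : ℝ) + j)) (n + 1)]
  have hnp : (0 : ℝ) < (n + 1 : ℕ) := by positivity
  have hrpow : ((n + 1 : ℕ) : ℝ) ^ (1 / 2 + 1 / (m : ℝ)) =
      ((n + 1 : ℕ) : ℝ) ^ ((1 : ℝ) / 2) * ((n + 1 : ℕ) : ℝ) ^ (1 / (m : ℝ)) :=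
    Real.rpow_add hnp _ _
  rw [hrpow]
  have hP1 := aux_prod_pos (show (0:ℝ) < 1/2 by norm_num) (n + 1)
  have hP2 := aux_prod_pos (show (0:ℝ) < 1/(m:ℝ) by positivity) (n + 1)
  have hP3 := aux_prod_pos (show (0:ℝ) < 1/2 + 1/(m:ℝ) by positivity) (n + 1)
  have hX : (0:ℝ) < ((n + 1 : ℕ) : ℝ) ^ ((1:ℝ)/2) := Real.rpow_pos_of_pos hnp _
  have hY : (0:ℝ) < ((n + 1 : ℕ) : ℝ) ^ (1/(m:ℝ)) := Real.rpow_pos_of_pos hnp _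
  have hfac : (Nat.factorial (n+1) : ℝ) = (n + 1 : ℝ) * Nat.factorial n := by
    push_cast [Nat.factorial_succ]; ring
  have h4 : (0:ℝ) < 1/2 + 1/(m:ℝ) + ((n+1:ℕ):ℝ) := by positivity
  have h5 : (0:ℝ) < 1/2 + ((n+1:ℕ):ℝ) := by positivity
  have h6 : (0:ℝ) < 1/(m:ℝ) + ((n+1:ℕ):ℝ) := by positivity
  rw [hfac]
  push_cast
  field_simp
  ring

lemma real_beta {u v : ℝ} (hu : 0 < u) (hv : 0 < v) :
    ∫ x in (0:ℝ)..1, x ^ (u - 1) * (1 - x) ^ (v - 1)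
      = Real.Gamma u * Real.Gamma v / Real.Gamma (u + v) := by
  have key : Complex.Gamma u * Complex.Gamma v
      = Complex.Gamma (u + v) * Complex.betaIntegral u v :=
    Complex.Gamma_mul_Gamma_eq_betaIntegral (by simpa using hu) (by simpa using hv)
  have hbeta : Complex.betaIntegral u v
      = ((∫ x in (0:ℝ)..1, x ^ (u - 1) * (1 - x) ^ (v - 1) : ℝ) : ℂ) := by
    rw [Complex.betaIntegral, ← intervalIntegral.integral_ofReal]
    refine intervalIntegral.integral_congr fun x hx => ?_
    rw [Set.uIcc_of_le (by norm_num : (0:ℝ) ≤ 1)] at hx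
    rw [Complex.ofReal_mul, Complex.ofReal_cpow hx.1,
      Complex.ofReal_cpow (by linarith [hx.2] : (0:ℝ) ≤ 1 - x)]
    push_cast
    ring
  rw [hbeta, ← Complex.ofReal_add, Complex.Gamma_ofReal, Complex.Gamma_ofReal,
    Complex.Gamma_ofReal, ← Complex.ofReal_mul, ← Complex.ofReal_mul] at key
  have := Complex.ofReal_injective key
  have hG : Real.Gamma (u + v) ≠ 0 := (Real.Gamma_pos_of_pos (by linarith)).ne'
  field_simp
  linarith [this]

lemma subst_clover (m : ℕ) (hm : 1 ≤ m) :
    ∫ u in (0:ℝ)..1, u ^ (1 / (m:ℝ) - 1) * (1 - u) ^ (-(1/2) : ℝ)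
      = m * ∫ t in (0:ℝ)..1, (1 - t ^ m) ^ (-(1/2) : ℝ) := by
  have hm0 : (m:ℝ) ≠ 0 := Nat.cast_ne_zero.mpr (by omega)
  have himg : (fun t : ℝ => t ^ m) '' Set.Ioo 0 1 = Set.Ioo (0:ℝ) 1 := by
    ext u
    constructor
    · rintro ⟨t, ⟨ht0, ht1⟩, rfl⟩
      exact ⟨pow_pos ht0 m, pow_lt_one₀ ht0.le ht1 (by omega)⟩
    · rintro ⟨hu0, hu1⟩
      refine ⟨u ^ (1/(m:ℝ)), ⟨Real.rpow_pos_of_pos hu0 _,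
        Real.rpow_lt_one hu0.le hu1 (by positivity)⟩, ?_⟩
      show (u ^ (1/(m:ℝ))) ^ m = u
      rw [← Real.rpow_natCast (u ^ (1/(m:ℝ))) m, ← Real.rpow_mul hu0.le]
      rw [one_div, inv_mul_cancel₀ hm0, Real.rpow_one]
  have hderiv : ∀ x ∈ Set.Ioo (0:ℝ) 1,
      HasDerivWithinAt (fun t : ℝ => t ^ m) ((m:ℝ) * x ^ (m - 1)) (Set.Ioo 0 1) x :=
    fun x _ => (hasDerivAt_pow m x).hasDerivWithinAt
  have hinj : Set.InjOn (fun t : ℝ => t ^ m) (Set.Ioo 0 1) :=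
    (pow_left_strictMonoOn₀ (by omega : m ≠ 0)).injOn.mono
      (fun x hx => le_of_lt hx.1)
  have key := integral_image_eq_integral_abs_deriv_smul measurableSet_Ioo hderiv hinj
    (fun u => u ^ (1 / (m:ℝ) - 1) * (1 - u) ^ (-(1/2) : ℝ))
  rw [himg] at key
  rw [intervalIntegral.integral_of_le (by norm_num : (0:ℝ) ≤ 1),
    intervalIntegral.integral_of_le (by norm_num : (0:ℝ) ≤ 1),
    integral_Ioc_eq_integral_Ioo, integral_Ioc_eq_integral_Ioo, key]
  rw [← integral_const_mul]
  refine setIntegral_congr_fun measurableSet_Ioo fun t ht => ?_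
  obtain ⟨ht0, ht1⟩ := ht
  have h1 : (t ^ m : ℝ) ^ (1/(m:ℝ) - 1) = t ^ (1 - (m:ℝ)) := by
    rw [← Real.rpow_natCast t m, ← Real.rpow_mul ht0.le]
    congr 1
    field_simp
  have h2 : (t : ℝ) ^ (m - 1) = t ^ ((m:ℝ) - 1) := by
    rw [← Real.rpow_natCast t (m - 1)]
    congr 1
    push_cast [Nat.cast_sub (by omega : 1 ≤ m)]
    ring
  have habs : |(m:ℝ) * t ^ (m - 1)| = (m:ℝ) * t ^ (m - 1) := by
    rw [abs_of_nonneg]; positivity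
  rw [smul_eq_mul, habs, h1, h2]
  rw [show ((m:ℝ) * t ^ ((m:ℝ)-1) * (t ^ (1 - (m:ℝ)) * (1 - t ^ m) ^ (-(1/2):ℝ)))
      = (m:ℝ) * (t ^ ((m:ℝ)-1) * t ^ (1 - (m:ℝ))) * (1 - t ^ m) ^ (-(1/2):ℝ) by ring,
    ← Real.rpow_add ht0]
  norm_num

/-- For `m ≥ 1` and `ϖ = 2 ∫_0^1 (1 - t^m)^(-1/2) dt`, we have
`ϖ = lim_{n → ∞} (Γ_2(n,0) Γ_{2m}(n, m+2)) / (Γ_2(n,1) Γ_{2m}(n,2)) · (4/m)`. -/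
theorem clover_constant_as_limit (m : ℕ) (hm : 1 ≤ m)
    (ϖ : ℝ) (hϖ : ϖ = 2 * ∫ t in (0:ℝ)..1, (1 - t ^ m) ^ (-(1/2) : ℝ)) :
    Tendsto (fun n : ℕ =>
        congGamma 2 n 0 * congGamma (2 * m) n (m + 2) /
          (congGamma 2 n 1 * congGamma (2 * m) n 2) * (4 / m))
      atTop (𝓝 ϖ) := by
  have hm0 : (m:ℝ) ≠ 0 := Nat.cast_ne_zero.mpr (by omega)
  have hmpos : (0:ℝ) < m := by positivity
  -- the value of the limit
  have hG3pos : 0 < Real.Gamma (1/2 + 1/(m:ℝ)) := Real.Gamma_pos_of_pos (by positivity)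
  -- value of ϖ
  have hϖval : ϖ = 2 / m * (Real.Gamma (1/2) * Real.Gamma (1/(m:ℝ)) /
      Real.Gamma (1/2 + 1/(m:ℝ))) * (1 * 1 / 1) := by
    have hJ := real_beta (show (0:ℝ) < 1/(m:ℝ) by positivity) (show (0:ℝ) < 1/2 by norm_num)
    have hsub := subst_clover m hm
    have heq : ∫ u in (0:ℝ)..1, u ^ (1/(m:ℝ) - 1) * (1 - u) ^ ((1:ℝ)/2 - 1)
        = ∫ u in (0:ℝ)..1, u ^ (1/(m:ℝ) - 1) * (1 - u) ^ (-(1/2) : ℝ) := by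
      norm_num
    rw [heq] at hJ
    rw [hϖ]
    rw [show (2:ℝ) * ∫ t in (0:ℝ)..1, (1 - t ^ m) ^ (-(1/2) : ℝ)
        = 2 / m * ((m:ℝ) * ∫ t in (0:ℝ)..1, (1 - t ^ m) ^ (-(1/2) : ℝ)) by
      field_simp]
    rw [← hsub, hJ]
    rw [show 1/(m:ℝ) + 1/2 = 1/2 + 1/(m:ℝ) by ring]
    ring
  rw [hϖval]
  rw [← tendsto_add_atTop_iff_nat 1]
  -- GammaSeq limits composed with n ↦ n + 1
  have hGS : ∀ s : ℝ, Tendsto (fun n : ℕ => Real.GammaSeq s (n + 1)) atTop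
      (𝓝 (Real.Gamma s)) := fun s =>
    (Real.GammaSeq_tendsto_Gamma s).comp (tendsto_add_atTop_nat 1)
  -- the rational factor tends to 1
  have hdiv : ∀ c : ℝ, Tendsto (fun n : ℕ => c / ((n:ℝ) + 1) + 1) atTop (𝓝 1) := by
    intro c
    have h0 : Tendsto (fun n : ℕ => c / ((n:ℝ) + 1)) atTop (𝓝 0) := by
      have := (tendsto_const_div_atTop_nhds_zero_nat c).comp (tendsto_add_atTop_nat 1)
      refine this.congr fun n => ?_
      simp [Function.comp]
    simpa using h0.add tendsto_const_nhds
  have hrat : Tendsto (fun n : ℕ =>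
      (1/2 + ((n:ℝ) + 1)) * (1/(m:ℝ) + ((n:ℝ) + 1)) /
        (((n:ℝ) + 1) * (1/2 + 1/(m:ℝ) + ((n:ℝ) + 1)))) atTop (𝓝 (1 * 1 / 1)) := by
    have h := ((hdiv (1/2)).mul (hdiv (1/(m:ℝ)))).div (hdiv (1/2 + 1/(m:ℝ)))
      (by norm_num)
    refine Tendsto.congr (fun n => ?_) h
    have hn1 : ((n:ℝ) + 1) ≠ 0 := by positivity
    simp only [Pi.div_apply]
    field_simp
  have hmain : Tendsto (fun n : ℕ =>
      2 / (m:ℝ) * (Real.GammaSeq (1/2) (n+1) * Real.GammaSeq (1/(m:ℝ)) (n+1) /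
        Real.GammaSeq (1/2 + 1/(m:ℝ)) (n+1)) *
      ((1/2 + ((n:ℝ) + 1)) * (1/(m:ℝ) + ((n:ℝ) + 1)) /
        (((n:ℝ) + 1) * (1/2 + 1/(m:ℝ) + ((n:ℝ) + 1))))) atTop
      (𝓝 (2 / m * (Real.Gamma (1/2) * Real.Gamma (1/(m:ℝ)) /
        Real.Gamma (1/2 + 1/(m:ℝ))) * (1 * 1 / 1))) :=
    ((tendsto_const_nhds.mul (((hGS (1/2)).mul (hGS (1/(m:ℝ)))).div
      (hGS (1/2 + 1/(m:ℝ))) hG3pos.ne')).mul hrat)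
  refine hmain.congr fun n => ?_
  rw [← seq_eq m hm n]
end

section
/- Let m ≥ 1 be a natural number, ϖ_m = 2∫_0^1 (1-t^m)^(-1/2) dt, and let φ : ℝ → ℝ satisfy: x = ∫_0^{φ(x)} (1-t^m)^(-1/2) dt and 0 ≤ φ(x) ≤ 1 for all x ∈ [0, ϖ_m/2], and φ(ϖ_m - x) = φ(x) for all x ∈ [0, ϖ_m]. Then ∫_0^{ϖ_m} φ(x)^m dx = (2/(m+2))·ϖ_m. -/
open MeasureTheory Set intervalIntegral Filter Topology

lemma clover_aux_cont (m : ℕ) {s : Set ℝ} (hs : ∀ t ∈ s, 1 - t ^ m ≠ 0) :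
    ContinuousOn (fun t : ℝ => (1 - t ^ m) ^ (-(1/2) : ℝ)) s :=
  (continuousOn_const.sub (continuousOn_pow m)).rpow_const fun t ht => Or.inl (hs t ht)

lemma clover_aux_integrable (m : ℕ) (hm : 1 ≤ m) :
    IntervalIntegrable (fun t : ℝ => (1 - t ^ m) ^ (-(1/2) : ℝ)) volume 0 1 := by
  have hg : IntervalIntegrable (fun t : ℝ => (1 - t) ^ (-(1/2) : ℝ)) volume 0 1 := by
    have h := (intervalIntegrable_rpow' (a := 0) (b := 1)
      (by norm_num : (-1:ℝ) < -(1/2))).comp_sub_left 1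
    simpa using h.symm
  refine hg.mono_fun ?_ ?_
  · rw [Set.uIoc_of_le (by norm_num : (0:ℝ) ≤ 1),
      ← Measure.restrict_congr_set MeasureTheory.Ioo_ae_eq_Ioc]
    exact (clover_aux_cont m (fun t ht => by
      have : t ^ m < 1 := pow_lt_one₀ ht.1.le ht.2 (by omega)
      exact ne_of_gt (by linarith))).aestronglyMeasurable measurableSet_Ioo
  · filter_upwards [MeasureTheory.ae_restrict_mem measurableSet_uIoc] with t ht
    rw [Set.uIoc_of_le (by norm_num : (0:ℝ) ≤ 1)] at ht
    obtain ⟨ht0, ht1⟩ := ht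
    have htm : t ^ m ≤ t := pow_le_of_le_one ht0.le ht1 (by omega)
    have h1 : 0 ≤ 1 - t ^ m := by nlinarith [pow_le_one₀ ht0.le ht1 (n := m)]
    rcases eq_or_lt_of_le ht1 with h | h
    · subst h
      simp [Real.zero_rpow (by norm_num : (-(1/2):ℝ) ≠ 0)]
    · have h2 : 0 < 1 - t := by linarith
      have h3 : 1 - t ≤ 1 - t ^ m := by linarith
      rw [Real.norm_eq_abs, Real.norm_eq_abs, abs_of_nonneg (Real.rpow_nonneg h1 _),
        abs_of_nonneg (Real.rpow_nonneg h2.le _)]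
      exact Real.rpow_le_rpow_of_nonpos h2 h3 (by norm_num)

lemma clover_aux_mul_integrable (m : ℕ) (hm : 1 ≤ m) :
    IntervalIntegrable (fun t : ℝ => t ^ m * (1 - t ^ m) ^ (-(1/2) : ℝ)) volume 0 1 :=
  (clover_aux_integrable m hm).continuousOn_mul (continuousOn_pow m)

lemma clover_aux_hasDeriv (m : ℕ) (hm : 1 ≤ m) {t : ℝ} (hu : 0 < 1 - t ^ m) :
    HasDerivAt (fun r : ℝ => r * (1 - r ^ m) ^ ((1/2) : ℝ))
      ((1 - t ^ m) ^ (-(1/2) : ℝ)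
        - (((m:ℝ)+2)/2) * (t ^ m * (1 - t ^ m) ^ (-(1/2) : ℝ))) t := by
  have h1 : HasDerivAt (fun r : ℝ => 1 - r ^ m) (-((m:ℝ) * t ^ (m-1))) t := by
    simpa using (hasDerivAt_pow m t).const_sub 1
  have h2 : HasDerivAt (fun r : ℝ => (1 - r ^ m) ^ ((1/2) : ℝ))
      ((-((m:ℝ) * t ^ (m-1))) * (1/2) * (1 - t ^ m) ^ ((1/2 : ℝ) - 1)) t :=
    h1.rpow_const (Or.inl hu.ne')
  have h3 := (hasDerivAt_id t).mul h2
  refine h3.congr_deriv ?_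
  have e1 : ((1/2 : ℝ) - 1) = -(1/2) := by norm_num
  have e2 : (1 - t ^ m) ^ ((1/2) : ℝ)
      = (1 - t ^ m) * (1 - t ^ m) ^ (-(1/2) : ℝ) := by
    have h := Real.rpow_one_add' (x := 1 - t ^ m) (y := -(1/2)) hu.le (by norm_num)
    norm_num at h
    exact h
  have e3 : t ^ (m - 1) * t = t ^ m := by
    rw [← pow_succ]; congr 1; omega
  rw [e1, e2, id_eq]
  linear_combination (-((m:ℝ)/2 * (1 - t ^ m) ^ (-(1/2) : ℝ))) * e3

lemma clover_aux_key (m : ℕ) (hm : 1 ≤ m) :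
    (∫ t in (0:ℝ)..1, (1 - t ^ m) ^ (-(1/2) : ℝ))
      = (((m:ℝ)+2)/2) * ∫ t in (0:ℝ)..1, t ^ m * (1 - t ^ m) ^ (-(1/2) : ℝ) := by
  set f : ℝ → ℝ := fun t => (1 - t ^ m) ^ (-(1/2) : ℝ) with hf
  set F : ℝ → ℝ := fun r => r * (1 - r ^ m) ^ ((1/2) : ℝ) with hFdef
  set c : ℝ := ((m:ℝ)+2)/2 with hc
  have hpos : ∀ t : ℝ, t ∈ Ico (0:ℝ) 1 → 0 < 1 - t ^ m := fun t ht => by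
    have : t ^ m < 1 := pow_lt_one₀ ht.1 ht.2 (by omega)
    linarith
  -- F s equals the primitive difference on [0,1)
  have hFs : ∀ s ∈ Ico (0:ℝ) 1,
      F s = (∫ t in (0:ℝ)..s, f t) - c * ∫ t in (0:ℝ)..s, t ^ m * f t := by
    intro s hs
    have hsub : uIcc (0:ℝ) s ⊆ Ico (0:ℝ) 1 := by
      rw [uIcc_of_le hs.1]
      exact Icc_subset_Ico_right hs.2 |>.trans (by
        intro x hx; exact ⟨hx.1, hx.2⟩)
    have hderiv : ∀ t ∈ uIcc (0:ℝ) s,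
        HasDerivAt F (f t - c * (t ^ m * f t)) t := fun t ht =>
      clover_aux_hasDeriv m hm (hpos t (hsub ht))
    have hcont : ContinuousOn (fun t : ℝ => f t - c * (t ^ m * f t)) (uIcc 0 s) := by
      have := clover_aux_cont m (s := uIcc (0:ℝ) s)
        (fun t ht => (hpos t (hsub ht)).ne')
      exact this.sub (continuousOn_const.mul ((continuousOn_pow m).mul this))
    have := integral_eq_sub_of_hasDerivAt hderiv hcont.intervalIntegrable
    have hint1 : IntervalIntegrable f volume 0 s :=
      (clover_aux_integrable m hm).mono_set (by
        rw [uIcc_of_le hs.1, uIcc_of_le (by norm_num : (0:ℝ) ≤ 1)]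
        exact Icc_subset_Icc le_rfl hs.2.le)
    have hint2 : IntervalIntegrable (fun t => t ^ m * f t) volume 0 s :=
      (clover_aux_mul_integrable m hm).mono_set (by
        rw [uIcc_of_le hs.1, uIcc_of_le (by norm_num : (0:ℝ) ≤ 1)]
        exact Icc_subset_Icc le_rfl hs.2.le)
    rw [integral_sub hint1 (hint2.const_mul c), intervalIntegral.integral_const_mul] at this
    have hF0 : F 0 = 0 := by simp [hFdef]
    rw [hF0, sub_zero] at this
    rw [← this]
  -- limits
  haveI : (𝓝[Ico (0:ℝ) 1] 1).NeBot := right_nhdsWithin_Ico_neBot zero_lt_one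
  have hFcont : Continuous F := by
    apply continuous_id.mul
    exact (continuous_const.sub (continuous_pow m)).rpow_const fun x => Or.inr (by norm_num)
  have hF1 : F 1 = 0 := by
    simp [hFdef, Real.zero_rpow (by norm_num : ((1:ℝ)/2) ≠ 0)]
  have hFlim : Tendsto F (𝓝[Ico (0:ℝ) 1] 1) (𝓝 0) := by
    rw [← hF1]
    exact (hFcont.tendsto 1).mono_left nhdsWithin_le_nhds
  have hIccInt : IntegrableOn f (Icc (0:ℝ) 1) volume := by
    rw [integrableOn_Icc_iff_integrableOn_Ioc]
    exact (intervalIntegrable_iff_integrableOn_Ioc_of_le (by norm_num)).mp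
      (clover_aux_integrable m hm)
  have hIccInt2 : IntegrableOn (fun t => t ^ m * f t) (Icc (0:ℝ) 1) volume := by
    rw [integrableOn_Icc_iff_integrableOn_Ioc]
    exact (intervalIntegrable_iff_integrableOn_Ioc_of_le (by norm_num)).mp
      (clover_aux_mul_integrable m hm)
  have hprim1 : Tendsto (fun s => ∫ t in (0:ℝ)..s, f t) (𝓝[Ico (0:ℝ) 1] 1)
      (𝓝 (∫ t in (0:ℝ)..1, f t)) := by
    have := (continuousOn_primitive_interval (a := 0) (b := 1) (f := f) (by
      rwa [uIcc_of_le (by norm_num : (0:ℝ) ≤ 1)])) 1 (by norm_num)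
    exact (this.tendsto).mono_left (nhdsWithin_mono _ (by rw [uIcc_of_le (by norm_num : (0:ℝ) ≤ 1)]; exact Ico_subset_Icc_self))
  have hprim2 : Tendsto (fun s => ∫ t in (0:ℝ)..s, t ^ m * f t) (𝓝[Ico (0:ℝ) 1] 1)
      (𝓝 (∫ t in (0:ℝ)..1, t ^ m * f t)) := by
    have := (continuousOn_primitive_interval (a := 0) (b := 1)
      (f := fun t => t ^ m * f t) (by
      rwa [uIcc_of_le (by norm_num : (0:ℝ) ≤ 1)])) 1 (by norm_num)
    exact (this.tendsto).mono_left (nhdsWithin_mono _ (by rw [uIcc_of_le (by norm_num : (0:ℝ) ≤ 1)]; exact Ico_subset_Icc_self))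
  have hcomb : Tendsto (fun s => (∫ t in (0:ℝ)..s, f t) - c * ∫ t in (0:ℝ)..s, t ^ m * f t)
      (𝓝[Ico (0:ℝ) 1] 1)
      (𝓝 ((∫ t in (0:ℝ)..1, f t) - c * ∫ t in (0:ℝ)..1, t ^ m * f t)) :=
    hprim1.sub (hprim2.const_mul c)
  have hFlim' : Tendsto F (𝓝[Ico (0:ℝ) 1] 1)
      (𝓝 ((∫ t in (0:ℝ)..1, f t) - c * ∫ t in (0:ℝ)..1, t ^ m * f t)) := by
    refine hcomb.congr' ?_
    filter_upwards [self_mem_nhdsWithin] with s hs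
    exact (hFs s hs).symm
  have h0 : (∫ t in (0:ℝ)..1, f t) - c * ∫ t in (0:ℝ)..1, t ^ m * f t = 0 :=
    tendsto_nhds_unique hFlim' hFlim
  linarith [h0]

lemma clover_f_cont (m : ℕ) {s : Set ℝ} (hs : ∀ t ∈ s, 1 - t ^ m ≠ 0) :
    ContinuousOn (fun t : ℝ => (1 - t ^ m) ^ (-(1/2) : ℝ)) s :=
  (continuousOn_const.sub (continuousOn_pow m)).rpow_const fun t ht => Or.inl (hs t ht)

lemma clover_f_nonneg (m : ℕ) {t : ℝ} (ht : t ∈ Icc (0:ℝ) 1) :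
    0 ≤ (1 - t ^ m) ^ (-(1/2) : ℝ) :=
  Real.rpow_nonneg (by nlinarith [pow_le_one₀ ht.1 ht.2 (n := m)]) _

lemma clover_f_sub_integrable (m : ℕ) (hm : 1 ≤ m) {a b : ℝ}
    (ha : a ∈ Icc (0:ℝ) 1) (hb : b ∈ Icc (0:ℝ) 1) :
    IntervalIntegrable (fun t : ℝ => (1 - t ^ m) ^ (-(1/2) : ℝ)) volume a b :=
  (clover_aux_integrable m hm).mono_set (by
    rw [uIcc_of_le (by norm_num : (0:ℝ) ≤ 1)]
    exact uIcc_subset_Icc ha hb)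

lemma clover_l_strictMono (m : ℕ) (hm : 1 ≤ m) :
    StrictMonoOn (fun r : ℝ => ∫ t in (0:ℝ)..r, (1 - t ^ m) ^ (-(1/2) : ℝ))
      (Icc 0 1) := by
  intro a ha b hb hab
  have key : (0:ℝ) < ∫ t in a..b, (1 - t ^ m) ^ (-(1/2) : ℝ) := by
    refine intervalIntegral_pos_of_pos_on (clover_f_sub_integrable m hm ha hb) ?_ hab
    intro x hx
    have hx0 : 0 ≤ x := le_trans ha.1 hx.1.le
    have hx1 : x < 1 := lt_of_lt_of_le hx.2 hb.2
    have : x ^ m < 1 := pow_lt_one₀ hx0 hx1 (by omega)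
    exact Real.rpow_pos_of_pos (by linarith) _
  have hsub := integral_interval_sub_left
    (clover_f_sub_integrable m hm ⟨le_refl 0, by norm_num⟩ hb)
    (clover_f_sub_integrable m hm ⟨le_refl 0, by norm_num⟩ ha)
  simp only []
  linarith [hsub, key]

lemma clover_l_mem (m : ℕ) (hm : 1 ≤ m) {r : ℝ} (hr : r ∈ Icc (0:ℝ) 1) :
    (∫ t in (0:ℝ)..r, (1 - t ^ m) ^ (-(1/2) : ℝ))
      ∈ Icc (0:ℝ) (∫ t in (0:ℝ)..1, (1 - t ^ m) ^ (-(1/2) : ℝ)) := by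
  constructor
  · exact intervalIntegral.integral_nonneg hr.1
      (fun u hu => clover_f_nonneg m ⟨hu.1, le_trans hu.2 hr.2⟩)
  · rcases eq_or_lt_of_le hr.2 with h | h
    · rw [h]
    · exact le_of_lt (clover_l_strictMono m hm hr ⟨by norm_num, le_refl 1⟩ h)

lemma clover_l_hasDeriv (m : ℕ) (hm : 1 ≤ m) {r : ℝ} (hr : r ∈ Ioo (0:ℝ) 1) :
    HasDerivAt (fun u : ℝ => ∫ t in (0:ℝ)..u, (1 - t ^ m) ^ (-(1/2) : ℝ))
      ((1 - r ^ m) ^ (-(1/2) : ℝ)) r := by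
  have hne : ∀ t ∈ Ioo (0:ℝ) 1, 1 - t ^ m ≠ 0 := fun t ht => by
    have : t ^ m < 1 := pow_lt_one₀ ht.1.le ht.2 (by omega)
    exact ne_of_gt (by linarith)
  refine integral_hasDerivAt_right
    (clover_f_sub_integrable m hm ⟨le_refl 0, by norm_num⟩ ⟨hr.1.le, hr.2.le⟩)
    ((clover_f_cont m hne).stronglyMeasurableAtFilter isOpen_Ioo r hr) ?_
  exact (clover_f_cont m hne).continuousAt (isOpen_Ioo.mem_nhds hr)

lemma clover_l_image (m : ℕ) (hm : 1 ≤ m) :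
    (fun r : ℝ => ∫ t in (0:ℝ)..r, (1 - t ^ m) ^ (-(1/2) : ℝ)) '' Ioo 0 1
      = Ioo 0 (∫ t in (0:ℝ)..1, (1 - t ^ m) ^ (-(1/2) : ℝ)) := by
  set l : ℝ → ℝ := fun r : ℝ => ∫ t in (0:ℝ)..r, (1 - t ^ m) ^ (-(1/2) : ℝ) with hl
  have hl0 : l 0 = 0 := intervalIntegral.integral_same
  have hcont : ContinuousOn l (Icc 0 1) := by
    rw [hl]
    have : IntegrableOn (fun t : ℝ => (1 - t ^ m) ^ (-(1/2) : ℝ)) (uIcc 0 1) volume := by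
      rw [uIcc_of_le (by norm_num : (0:ℝ) ≤ 1), integrableOn_Icc_iff_integrableOn_Ioc]
      exact (intervalIntegrable_iff_integrableOn_Ioc_of_le (by norm_num)).mp
        (clover_aux_integrable m hm)
    have h2 := continuousOn_primitive_interval (a := 0) (b := 1) this
    rwa [uIcc_of_le (by norm_num : (0:ℝ) ≤ 1)] at h2
  apply Subset.antisymm
  · rintro x ⟨r, hr, rfl⟩
    constructor
    · have := clover_l_strictMono m hm ⟨le_refl 0, by norm_num⟩ ⟨hr.1.le, hr.2.le⟩ hr.1
      simp only [hl]
      simpa using this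
    · exact clover_l_strictMono m hm ⟨hr.1.le, hr.2.le⟩ ⟨by norm_num, le_refl 1⟩ hr.2
  · have := intermediate_value_Ioo (by norm_num : (0:ℝ) ≤ 1) hcont
    rw [hl0] at this
    exact this

/-- **Initial value `I_m(m) = (2/(m+2)) ϖ_m`.**
Let `m ≥ 1`, `ϖ = 2 ∫_0^1 (1 - t^m)^(-1/2) dt`, and `φ` the `m`-clover function.
Then `∫_0^ϖ φ(x)^m dx = (2/(m+2)) ϖ`. -/
theorem clover_integral_m (m : ℕ) (hm : 1 ≤ m)
    (ϖ : ℝ) (hϖ : ϖ = 2 * ∫ t in (0:ℝ)..1, (1 - t ^ m) ^ (-(1/2) : ℝ))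
    (φ : ℝ → ℝ)
    (hφ : ∀ x ∈ Set.Icc 0 (ϖ / 2),
      x = ∫ t in (0:ℝ)..(φ x), (1 - t ^ m) ^ (-(1/2) : ℝ))
    (hφ01 : ∀ x ∈ Set.Icc 0 (ϖ / 2), φ x ∈ Set.Icc (0:ℝ) 1)
    (hφsymm : ∀ x ∈ Set.Icc 0 ϖ, φ (ϖ - x) = φ x) :
    ∫ x in (0:ℝ)..ϖ, φ x ^ m = (2 / ((m : ℝ) + 2)) * ϖ := by
  have hϖ2 : ϖ / 2 = ∫ t in (0:ℝ)..1, (1 - t ^ m) ^ (-(1/2) : ℝ) := by rw [hϖ]; ring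
  have hϖpos : 0 < ϖ / 2 := by
    rw [hϖ2]
    have := clover_l_strictMono m hm (left_mem_Icc.2 (by norm_num))
      (right_mem_Icc.2 (by norm_num)) one_pos
    simpa using this
  have hϖ0 : (0:ℝ) ≤ ϖ := by linarith
  have hmem : ∀ r ∈ Icc (0:ℝ) 1,
      (∫ t in (0:ℝ)..r, (1 - t ^ m) ^ (-(1/2) : ℝ)) ∈ Icc 0 (ϖ/2) := by
    intro r hr; rw [hϖ2]; exact clover_l_mem m hm hr
  have hleft : ∀ r ∈ Icc (0:ℝ) 1,
      φ (∫ t in (0:ℝ)..r, (1 - t ^ m) ^ (-(1/2) : ℝ)) = r := by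
    intro r hr
    set x := ∫ t in (0:ℝ)..r, (1 - t ^ m) ^ (-(1/2) : ℝ) with hx
    have h1 := hφ x (hmem r hr)
    exact (clover_l_strictMono m hm).injOn (hφ01 x (hmem r hr)) hr (h1.symm.trans hx)
  have hφmono : MonotoneOn φ (Icc 0 (ϖ/2)) := by
    intro x hx y hy hxy
    by_contra hlt
    push_neg at hlt
    have h2 : (∫ t in (0:ℝ)..(φ y), (1 - t ^ m) ^ (-(1/2) : ℝ))
        < ∫ t in (0:ℝ)..(φ x), (1 - t ^ m) ^ (-(1/2) : ℝ) :=
      clover_l_strictMono m hm (hφ01 y hy) (hφ01 x hx) hlt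
    rw [← hφ y hy, ← hφ x hx] at h2
    exact absurd h2 (not_lt.mpr hxy)
  have hφhalf : φ (ϖ/2) = 1 := by
    have := hleft 1 (right_mem_Icc.2 (by norm_num))
    rwa [← hϖ2] at this
  -- change of variables
  have hCV : ∫ x in Ioo (0:ℝ) (ϖ/2), φ x ^ m
      = ∫ r in Ioo (0:ℝ) 1, r ^ m * (1 - r ^ m) ^ (-(1/2) : ℝ) := by
    have himg := clover_l_image m hm
    rw [← hϖ2] at himg
    have hchg := integral_image_eq_integral_abs_deriv_smul measurableSet_Ioo
      (fun r hr => (clover_l_hasDeriv m hm hr).hasDerivWithinAt)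
      ((clover_l_strictMono m hm).injOn.mono Ioo_subset_Icc_self)
      (fun x => φ x ^ m)
    rw [himg] at hchg
    rw [hchg]
    refine setIntegral_congr_fun measurableSet_Ioo ?_
    intro r hr
    have h1 : φ (∫ t in (0:ℝ)..r, (1 - t ^ m) ^ (-(1/2) : ℝ)) = r :=
      hleft r ⟨hr.1.le, hr.2.le⟩
    show |(1 - r ^ m) ^ (-(1/2) : ℝ)|
        • φ (∫ t in (0:ℝ)..r, (1 - t ^ m) ^ (-(1/2) : ℝ)) ^ m
      = r ^ m * (1 - r ^ m) ^ (-(1/2) : ℝ)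
    rw [abs_of_nonneg (clover_f_nonneg m ⟨hr.1.le, hr.2.le⟩), smul_eq_mul, h1, mul_comm]
  -- value of half integral
  have hhalf : ∫ x in (0:ℝ)..(ϖ/2), φ x ^ m = (2/((m:ℝ)+2)) * (ϖ/2) := by
    rw [integral_of_le hϖpos.le, integral_Ioc_eq_integral_Ioo, hCV,
      ← integral_Ioc_eq_integral_Ioo,
      ← integral_of_le (by norm_num : (0:ℝ) ≤ 1)]
    have hk := clover_aux_key m hm
    rw [← hϖ2] at hk
    have hm2 : ((m:ℝ) + 2) ≠ 0 := by positivity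
    field_simp at hk ⊢
    linarith
  -- integrability of φ^m on both halves
  have hint1 : IntervalIntegrable (fun x => φ x ^ m) volume 0 (ϖ/2) := by
    refine MonotoneOn.intervalIntegrable ?_
    rw [uIcc_of_le hϖpos.le]
    intro x hx y hy hxy
    exact pow_le_pow_left₀ (hφ01 x hx).1 (hφmono hx hy hxy) m
  have hint2 : IntervalIntegrable (fun x => φ x ^ m) volume (ϖ/2) ϖ := by
    refine AntitoneOn.intervalIntegrable ?_
    rw [uIcc_of_le (by linarith : ϖ/2 ≤ ϖ)]
    intro x hx y hy hxy
    have hx' : ϖ - x ∈ Icc (0:ℝ) (ϖ/2) := ⟨by linarith [hx.2], by linarith [hx.1]⟩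
    have hy' : ϖ - y ∈ Icc (0:ℝ) (ϖ/2) := ⟨by linarith [hy.2], by linarith [hy.1]⟩
    have e1 : φ x = φ (ϖ - x) := (hφsymm x ⟨by linarith [hx.1], hx.2⟩).symm
    have e2 : φ y = φ (ϖ - y) := (hφsymm y ⟨by linarith [hy.1], hy.2⟩).symm
    have : φ y ≤ φ x := by
      rw [e1, e2]
      exact hφmono hy' hx' (by linarith)
    exact pow_le_pow_left₀ (by rw [e2]; exact (hφ01 _ hy').1) this m
  -- symmetry
  have hsym : ∫ x in (ϖ/2)..ϖ, φ x ^ m = ∫ x in (0:ℝ)..(ϖ/2), φ x ^ m := by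
    have h1 : ∫ x in (ϖ/2)..ϖ, φ x ^ m = ∫ x in (ϖ/2)..ϖ, φ (ϖ - x) ^ m := by
      apply intervalIntegral.integral_congr
      intro x hx
      rw [uIcc_of_le (by linarith : ϖ/2 ≤ ϖ)] at hx
      show φ x ^ m = φ (ϖ - x) ^ m
      rw [hφsymm x ⟨by linarith [hx.1], hx.2⟩]
    rw [h1]
    have h2 := intervalIntegral.integral_comp_sub_left
      (a := ϖ/2) (b := ϖ) (fun x => φ x ^ m) ϖ
    rw [sub_self, show ϖ - ϖ/2 = ϖ/2 from by ring] at h2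
    exact h2
  have hsplit := intervalIntegral.integral_add_adjacent_intervals hint1 hint2
  rw [← hsplit, hsym, hhalf]
  ring
end
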